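/- arXiv:1604.02833 — 4 statements merged into one kernel-verified Lean document; each statement's English description precedes it below -/
import Mathlib

section
/- Let g be a finite simple graph, let φ be a set of pairwise parallel minimal separators of g, and let h be a minimal triangulation of the graph g_[φ]. Then h is a minimal triangulation of g, and MinSep(h) is a maximal set of pairwise parallel minimal separators of g that contains φ. -/
open SimpleGraph

/-- A graph is chordal if every cycle of length greater than three has a chord,
i.e. an edge joining two vertices of the cycle that are non-adjacent on the cycle. -/
def IsChordal {V : Type} (h : SimpleGraph V) : Prop :=
  ∀ (v : V) (c : h.Walk v v), c.IsCycle → 3 < c.length →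
    ∃ u w : V, u ∈ c.support ∧ w ∈ c.support ∧ h.Adj u w ∧ s(u, w) ∉ c.edges

/-- The set of minimal triangulations of `g` (chordal supergraphs on the same vertex
set, minimal with respect to edge inclusion). -/
def MinTri {V : Type} (g : SimpleGraph V) : Set (SimpleGraph V) :=
  {h | g ≤ h ∧ IsChordal h ∧ ∀ h' : SimpleGraph V, g ≤ h' → h' < h → ¬ IsChordal h'}

/-- `S` is a `(u,v)`-separator of `g`: `u` and `v` lie in distinct connected
components of `g` with the vertices of `S` deleted. -/
def IsSep {V : Type} (g : SimpleGraph V) (u v : V) (S : Set V) : Prop :=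
  ∃ (hu : u ∈ Sᶜ) (hv : v ∈ Sᶜ),
    ¬ (g.induce Sᶜ).Reachable ⟨u, hu⟩ ⟨v, hv⟩

/-- `S` is a minimal `(u,v)`-separator of `g`. -/
def IsMinSepPair {V : Type} (g : SimpleGraph V) (u v : V) (S : Set V) : Prop :=
  IsSep g u v S ∧ ∀ S' : Set V, S' ⊂ S → ¬ IsSep g u v S'

/-- The set of minimal separators of `g`. -/
def MinSep {V : Type} (g : SimpleGraph V) : Set (Set V) :=
  {S | ∃ u v : V, IsMinSepPair g u v S}

/-- `S` crosses `T`. -/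
def Crosses {V : Type} (g : SimpleGraph V) (S T : Set V) : Prop :=
  ∃ u ∈ T, ∃ v ∈ T, IsSep g u v S

/-- `φ` is a set of pairwise parallel (non-crossing) minimal separators of `g`. -/
def PairwiseParallel {V : Type} (g : SimpleGraph V) (φ : Set (Set V)) : Prop :=
  φ ⊆ MinSep g ∧ φ.Pairwise fun S T => ¬ Crosses g S T

/-- `φ` is a maximal set of pairwise parallel minimal separators of `g`. -/
def MaxPairwiseParallel {V : Type} (g : SimpleGraph V) (φ : Set (Set V)) : Prop :=
  PairwiseParallel g φ ∧ ∀ ψ : Set (Set V), PairwiseParallel g ψ → φ ⊆ ψ → φ = ψ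

/-- `g_[φ]`: the graph obtained from `g` by saturating every member of `φ`. -/
def satSet {V : Type} (g : SimpleGraph V) (φ : Set (Set V)) : SimpleGraph V where
  Adj u v := g.Adj u v ∨ (u ≠ v ∧ ∃ S ∈ φ, u ∈ S ∧ v ∈ S)
  symm := by
    constructor
    intro u v h
    rcases h with h | ⟨hne, S, hS, hu, hv⟩
    · exact Or.inl h.symm
    · exact Or.inr ⟨hne.symm, S, hS, hv, hu⟩
  loopless := by
    constructor
    intro u h
    rcases h with h | ⟨hne, _⟩
    · exact g.loopless.irrefl u h
    · exact hne rfl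

/-- The neighborhood of a set `U` of vertices: vertices outside `U` adjacent to `U`. -/
def nbhd {V : Type} (g : SimpleGraph V) (U : Set V) : Set V :=
  {v | v ∉ U ∧ ∃ u ∈ U, g.Adj u v}

/-- `c` is (the vertex set of) a connected component of `g − S`. -/
def IsCompOf {V : Type} (g : SimpleGraph V) (S : Set V) (c : Set V) : Prop :=
  c ⊆ Sᶜ ∧ (g.induce c).Connected ∧
  ∀ u ∈ c, ∀ v : V, v ∉ S → g.Adj u v → v ∈ c

section Infra
variable {V : Type} {g h : SimpleGraph V} {S T : Set V} {u v w x y : V}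

/-- reachability within the complement of `S`. -/
def Reach (g : SimpleGraph V) (S : Set V) (u v : V) : Prop :=
  ∃ p : g.Walk u v, ∀ x ∈ p.support, x ∉ S

lemma Reach.left_not_mem (h : Reach g S u v) : u ∉ S := by
  obtain ⟨p, hp⟩ := h; exact hp u p.start_mem_support

lemma Reach.right_not_mem (h : Reach g S u v) : v ∉ S := by
  obtain ⟨p, hp⟩ := h; exact hp v p.end_mem_support

lemma Reach.rfl (h : u ∉ S) : Reach g S u u :=
  ⟨SimpleGraph.Walk.nil, by simp [h]⟩

lemma Reach.symm (h : Reach g S u v) : Reach g S v u := by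
  obtain ⟨p, hp⟩ := h; exact ⟨p.reverse, by simpa using hp⟩

lemma Reach.trans (h1 : Reach g S u v) (h2 : Reach g S v w) : Reach g S u w := by
  obtain ⟨p, hp⟩ := h1; obtain ⟨q, hq⟩ := h2
  refine ⟨p.append q, ?_⟩
  intro x hx
  rcases (SimpleGraph.Walk.mem_support_append_iff _ _).mp hx with hx | hx
  · exact hp x hx
  · exact hq x hx

lemma Reach.of_adj (h : g.Adj u v) (hu : u ∉ S) (hv : v ∉ S) : Reach g S u v :=
  ⟨SimpleGraph.Walk.cons h SimpleGraph.Walk.nil, by simp [hu, hv]⟩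

lemma Reach.mono (hle : g ≤ h) (hr : Reach g S u v) : Reach h S u v := by
  obtain ⟨p, hp⟩ := hr
  exact ⟨p.mapLe hle, by simpa [SimpleGraph.Walk.mapLe] using hp⟩

lemma Reach.anti (hle : T ⊆ S) (hr : Reach g S u v) : Reach g T u v := by
  obtain ⟨p, hp⟩ := hr; exact ⟨p, fun x hx hxT => hp x hx (hle hxT)⟩

/-- truncation: anything on the witness walk is reachable. -/
lemma Reach.to_support {p : g.Walk u v} (hp : ∀ x ∈ p.support, x ∉ S) (hw : w ∈ p.support) :
    Reach g S u w := by
  classical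
  exact ⟨p.takeUntil w hw, fun x hx => hp x (SimpleGraph.Walk.support_takeUntil_subset _ _ hx)⟩

/-- transfer reachability down from a larger graph whose extra edges stay in classes. -/
lemma Reach.transfer_down (hle : g ≤ h)
    (hedge : ∀ a b, h.Adj a b → a ∉ S → b ∉ S → Reach g S a b)
    (hr : Reach h S u v) : Reach g S u v := by
  obtain ⟨p, hp⟩ := hr
  induction p with
  | nil => exact Reach.rfl (by simpa using hp)
  | cons ha q ih =>
    rename_i a b c
    have hp' : ∀ x ∈ q.support, x ∉ S := fun x hx => hp x (by simp [hx])
    exact (hedge a b ha (hp a (by simp)) (hp b (by simp))).trans (ih hp')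

lemma reach_iff_induce (hu : u ∈ Sᶜ) (hv : v ∈ Sᶜ) :
    Reach g S u v ↔ (g.induce Sᶜ).Reachable ⟨u, hu⟩ ⟨v, hv⟩ := by
  constructor
  · rintro ⟨p, hp⟩
    have key : ∀ (a b : V) (p : g.Walk a b) (hp : ∀ x ∈ p.support, x ∉ S)
        (ha : a ∈ Sᶜ) (hb : b ∈ Sᶜ), (g.induce Sᶜ).Reachable ⟨a, ha⟩ ⟨b, hb⟩ := by
      intro a b p
      induction p with
      | nil => intro _ _ _; rfl
      | cons ha' q ih =>
        rename_i a' b' c'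
        intro hp hma hmc
        have hb : b' ∈ Sᶜ := hp b' (by simp)
        have : (g.induce Sᶜ).Adj ⟨a', hma⟩ ⟨b', hb⟩ := by
          simp [SimpleGraph.comap_adj, ha']
        exact this.reachable.trans (ih (fun x hx => hp x (by simp [hx])) hb hmc)
    exact key u v p hp hu hv
  · rintro ⟨q⟩
    -- convert a walk in the induced graph into a `Reach`
    have : ∀ (a b : (Sᶜ : Set V)) (q : (g.induce Sᶜ).Walk a b), Reach g S a.1 b.1 := by
      intro a b q
      induction q with
      | nil =>
        rename_i a
        exact Reach.rfl (Set.notMem_of_mem_compl a.2)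
      | cons ha q ih =>
        rename_i a' b' c'
        have hab : g.Adj a'.1 b'.1 := ha
        exact (Reach.of_adj hab (Set.notMem_of_mem_compl a'.2)
          (Set.notMem_of_mem_compl b'.2)).trans ih
    exact this _ _ q

lemma isSep_iff : IsSep g u v S ↔ u ∉ S ∧ v ∉ S ∧ ¬ Reach g S u v := by
  constructor
  · rintro ⟨hu, hv, hr⟩
    exact ⟨hu, hv, fun h => hr ((reach_iff_induce hu hv).mp h)⟩
  · rintro ⟨hu, hv, hr⟩
    exact ⟨hu, hv, fun h => hr ((reach_iff_induce hu hv).mpr h)⟩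

lemma reach_of_not_isSep (hu : u ∉ S) (hv : v ∉ S) (h : ¬ IsSep g u v S) : Reach g S u v := by
  by_contra hr
  exact h (isSep_iff.mpr ⟨hu, hv, hr⟩)

end Infra

section MinSepChar
variable {V : Type} {g h : SimpleGraph V} {S T S' : Set V} {u v w x y s : V}

open SimpleGraph

lemma neighbor_extract (hs : s ∈ S) (hu : u ∉ S) (hr : Reach g (S \ {s}) u v)
    (hns : ¬ Reach g S u v) :
    ∃ a, g.Adj s a ∧ Reach g S u a := by
  classical
  obtain ⟨p, hp⟩ := hr
  have hsupp : s ∈ p.support := by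
    by_contra hsup
    refine hns ⟨p, fun x hx hxS => ?_⟩
    have : x ≠ s := fun hxs => hsup (hxs ▸ hx)
    exact hp x hx ⟨hxS, this⟩
  have hcount : (p.takeUntil s hsupp).support.count s = 1 :=
    p.count_support_takeUntil_eq_one hsupp
  have hq : ∀ x ∈ (p.takeUntil s hsupp).support, x ∉ S \ {s} :=
    fun x hx => hp x (Walk.support_takeUntil_subset _ _ hx)
  set q := p.takeUntil s hsupp with hqdef
  clear_value q
  cases hqr : q.reverse with
  | nil => exact absurd hs hu
  | cons h' r =>
    rename_i b
    have hss : q.support.reverse = s :: r.support := by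
      rw [← Walk.support_reverse, hqr, Walk.support_cons]
    have hrs : s ∉ r.support := by
      have h1 : (s :: r.support).count s = 1 := by
        rw [← hss, List.count_reverse]; exact hcount
      rw [List.count_cons_self] at h1
      exact List.count_eq_zero.mp (by omega)
    refine ⟨b, h', r.reverse, ?_⟩
    intro x hx
    rw [Walk.support_reverse, List.mem_reverse] at hx
    have hxq : x ∈ q.support := by
      rw [← List.mem_reverse, hss]; exact List.mem_cons_of_mem _ hx
    intro hxS
    have hxs : x ≠ s := fun he => hrs (he ▸ hx)
    exact hq x hxq ⟨hxS, hxs⟩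

lemma isMinSepPair_iff :
    IsMinSepPair g u v S ↔ (u ∉ S ∧ v ∉ S ∧ ¬ Reach g S u v) ∧
      ∀ s ∈ S, (∃ a, g.Adj s a ∧ Reach g S u a) ∧ (∃ b, g.Adj s b ∧ Reach g S v b) := by
  constructor
  · rintro ⟨hsep, hmin⟩
    obtain ⟨hu, hv, hnr⟩ := isSep_iff.mp hsep
    refine ⟨⟨hu, hv, hnr⟩, fun s hsS => ?_⟩
    have hssub : S \ {s} ⊂ S := by
      refine ⟨Set.diff_subset, fun hsub => ?_⟩
      exact (hsub hsS).2 rfl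
    have hns' : ¬ IsSep g u v (S \ {s}) := hmin _ hssub
    have hr' : Reach g (S \ {s}) u v :=
      reach_of_not_isSep (fun hm => hu hm.1) (fun hm => hv hm.1) hns'
    exact ⟨neighbor_extract hsS hu hr' hnr,
      neighbor_extract hsS hv hr'.symm (fun hrr => hnr hrr.symm)⟩
  · rintro ⟨⟨hu, hv, hnr⟩, hnbr⟩
    refine ⟨isSep_iff.mpr ⟨hu, hv, hnr⟩, fun S' hS' hsep' => ?_⟩
    have hsub := hS'.subset
    obtain ⟨s, hsS, hsS'⟩ := Set.exists_of_ssubset hS'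
    obtain ⟨⟨a, hadj, hra⟩, ⟨b, hbdj, hrb⟩⟩ := hnbr s hsS
    obtain ⟨hu', hv', hnr'⟩ := isSep_iff.mp hsep'
    refine hnr' ?_
    have ha' : a ∉ S' := fun hm => hra.right_not_mem (hsub hm)
    have hb' : b ∉ S' := fun hm => hrb.right_not_mem (hsub hm)
    exact (hra.anti hsub).trans ((Reach.of_adj hadj.symm ha' hsS').trans
      ((Reach.of_adj hbdj hsS' hb').trans (hrb.anti hsub).symm))

end MinSepChar

section Flip
variable {V : Type} {g h : SimpleGraph V} {S T S' : Set V} {u v w x y s : V}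

open SimpleGraph

lemma exists_minSepPair_subset [Fintype V] (hsep : IsSep g u v S) :
    ∃ S0, S0 ⊆ S ∧ IsMinSepPair g u v S0 := by
  classical
  suffices H : ∀ n (S : Set V), S.toFinset.card = n → IsSep g u v S →
      ∃ S0, S0 ⊆ S ∧ IsMinSepPair g u v S0 from H _ S rfl hsep
  intro n
  induction n using Nat.strong_induction_on with
  | _ n ih =>
    intro S hcard hsep
    by_cases hmin : ∀ S' ⊂ S, ¬ IsSep g u v S'
    · exact ⟨S, subset_rfl, hsep, hmin⟩
    · push_neg at hmin
      obtain ⟨S', hS', hsep'⟩ := hmin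
      have hlt : S'.toFinset.card < n := by
        rw [← hcard]
        exact Finset.card_lt_card (Set.toFinset_ssubset_toFinset.mpr hS')
      obtain ⟨S0, hsub, hmin0⟩ := ih _ hlt S' rfl hsep'
      exact ⟨S0, hsub.trans hS'.subset, hmin0⟩

lemma reach_of_not_crosses (hnc : ¬ Crosses g S T) (hx : x ∈ T) (hy : y ∈ T)
    (hxS : x ∉ S) (hyS : y ∉ S) : Reach g S x y :=
  reach_of_not_isSep hxS hyS (fun h => hnc ⟨x, hx, y, hy, h⟩)

/-- Lemma B′: one-sided parallelism flips for minimal separators. -/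
lemma parallel_flip (hS : IsMinSepPair g u v S)
    (hT : ∀ x ∈ T, ∀ y ∈ T, x ∉ S → y ∉ S → Reach g S x y) :
    ∀ x ∈ S, ∀ y ∈ S, x ∉ T → y ∉ T → Reach g T x y := by
  obtain ⟨⟨hu, hv, hnr⟩, hnbr⟩ := isMinSepPair_iff.mp hS
  -- pick an endpoint z ∈ {u,v} whose component misses T
  obtain ⟨z, hz, hzT⟩ : ∃ z, (∀ s ∈ S, ∃ a, g.Adj s a ∧ Reach g S z a) ∧
      (∀ t ∈ T, ¬ Reach g S z t) := by
    by_cases hcase : ∀ t ∈ T, ¬ Reach g S u t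
    · exact ⟨u, fun s hs => (hnbr s hs).1, hcase⟩
    · push_neg at hcase
      obtain ⟨t0, ht0, hrt0⟩ := hcase
      refine ⟨v, fun s hs => (hnbr s hs).2, fun t ht hrv => ?_⟩
      have h1 : Reach g S t t0 := hT t ht t0 ht0 hrv.right_not_mem hrt0.right_not_mem
      exact hnr (hrt0.trans ((h1.symm).trans hrv.symm))
  have key : ∀ x ∈ S, x ∉ T → Reach g T x z := by
    intro x hxS hxT
    obtain ⟨a, hadj, hra⟩ := hz x hxS
    obtain ⟨p, hp⟩ := hra.symm
    have hpT : ∀ w ∈ p.support, w ∉ T := by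
      intro w hw hwT
      have : Reach g S z w := (Reach.to_support hp hw).symm.trans hra.symm |>.symm
      exact hzT w hwT this
    exact (Reach.of_adj hadj hxT (hpT a p.start_mem_support)) |>.trans ⟨p, hpT⟩
  intro x hx y hy hxT hyT
  exact (key x hx hxT).trans (key y hy hyT).symm

end Flip

section Shortcut
variable {V : Type} {g h : SimpleGraph V} {S T : Set V} {u v w x y a b : V}

open SimpleGraph

lemma drop_lt_of_ne [DecidableEq V] {z y b : V} (rest : g.Walk z y) (hb : b ∈ rest.support)
    (hbz : b ≠ z) : (rest.dropUntil b hb).length < rest.length := by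
  have hspec := rest.take_spec hb
  have hlen := congrArg Walk.length hspec
  rw [Walk.length_append] at hlen
  have htake : (rest.takeUntil b hb).length ≠ 0 := by
    intro h0
    exact hbz (Walk.eq_of_length_eq_zero h0).symm
  omega

lemma shortcut {a b : V} : ∀ {x y : V} (p : g.Walk x y), g.Adj a b → a ∈ p.support →
    b ∈ p.support → s(a,b) ∉ p.edges →
    ∃ q : g.Walk x y, (∀ w ∈ q.support, w ∈ p.support) ∧ q.length < p.length := by
  classical
  intro x y p
  induction p with
  | nil =>
    intro hadj ha hb _
    simp only [Walk.support_nil, List.mem_singleton] at ha hb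
    exact absurd (ha.trans hb.symm) hadj.ne
  | cons e rest ih =>
    rename_i xx zz yy
    intro hadj ha hb hne
    rw [Walk.support_cons, List.mem_cons] at ha hb
    rw [Walk.edges_cons, List.mem_cons] at hne
    push_neg at hne
    obtain ⟨hne1, hne2⟩ := hne
    by_cases hax : a = xx
    · subst hax
      have hbr : b ∈ rest.support := hb.resolve_left (fun h => hadj.ne h.symm)
      have hbz : b ≠ zz := by
        intro hbz; subst hbz
        exact hne1 rfl
      refine ⟨Walk.cons hadj (rest.dropUntil b hbr), ?_, ?_⟩
      · intro w hw
        rw [Walk.support_cons, List.mem_cons] at hw ⊢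
        exact hw.imp id (fun hw => Walk.support_dropUntil_subset rest hbr hw)
      · simpa using Nat.succ_lt_succ (drop_lt_of_ne rest hbr hbz)
    · by_cases hbx : b = xx
      · subst hbx
        have har : a ∈ rest.support := ha.resolve_left hax
        have haz : a ≠ zz := by
          intro haz; subst haz
          exact hne1 Sym2.eq_swap
        refine ⟨Walk.cons hadj.symm (rest.dropUntil a har), ?_, ?_⟩
        · intro w hw
          rw [Walk.support_cons, List.mem_cons] at hw ⊢
          exact hw.imp id (fun hw => Walk.support_dropUntil_subset rest har hw)
        · simpa using Nat.succ_lt_succ (drop_lt_of_ne rest har haz)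
      · obtain ⟨q, hq1, hq2⟩ := ih hadj (ha.resolve_left hax) (hb.resolve_left hbx) hne2
        refine ⟨Walk.cons e q, ?_, ?_⟩
        · intro w hw
          rw [Walk.support_cons, List.mem_cons] at hw ⊢
          exact hw.imp id (hq1 w)
        · simpa using Nat.succ_lt_succ hq2

end Shortcut

section Dirac
variable {V : Type} {g h : SimpleGraph V} {S T : Set V} {u v w x y a b : V}

open SimpleGraph

lemma exists_min_path {Q : Set V} (hex : ∃ p : g.Walk x y, ∀ w ∈ p.support, w ∈ Q) :
    ∃ p : g.Walk x y, p.IsPath ∧ (∀ w ∈ p.support, w ∈ Q) ∧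
      ∀ α β, α ∈ p.support → β ∈ p.support → g.Adj α β → s(α, β) ∈ p.edges := by
  classical
  have hpred : ∃ n, ∃ p : g.Walk x y, (∀ w ∈ p.support, w ∈ Q) ∧ p.length = n := by
    obtain ⟨p, hp⟩ := hex
    exact ⟨p.length, p, hp, rfl⟩
  obtain ⟨p, hp, hlen⟩ := Nat.find_spec hpred
  have hmin : ∀ m, m < Nat.find hpred → ∀ q : g.Walk x y, (∀ w ∈ q.support, w ∈ Q) →
      q.length ≠ m := by
    intro m hm q hq hql
    exact Nat.find_min hpred hm ⟨q, hq, hql⟩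
  have hbp : ∀ w ∈ p.bypass.support, w ∈ Q := fun w hw => hp w (p.support_bypass_subset hw)
  have hbl : p.bypass.length = Nat.find hpred := by
    have h1 := p.length_bypass_le
    have h2 : ¬ p.bypass.length < Nat.find hpred := fun hc => hmin _ hc p.bypass hbp rfl
    omega
  refine ⟨p.bypass, p.bypass_isPath, hbp, ?_⟩
  intro α β hα hβ hadj
  by_contra hne
  obtain ⟨q, hq1, hq2⟩ := shortcut p.bypass hadj hα hβ hne
  exact hmin q.length (by omega) q (fun w hw => hbp w (hq1 w hw)) rfl

lemma walk_length_ge_two {p : g.Walk x y} (hxy : x ≠ y) (hnadj : ¬ g.Adj x y) :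
    2 ≤ p.length := by
  rcases Nat.lt_or_ge p.length 2 with h | h
  · interval_cases hl : p.length
    · exact absurd (Walk.eq_of_length_eq_zero hl) hxy
    · exact absurd (Walk.adj_of_length_eq_one hl) hnadj
  · exact h

/-- Dirac: in a chordal graph every minimal separator is a clique. -/
lemma clique_of_minSepPair_chordal (hch : IsChordal h) (hS : IsMinSepPair h u v S) :
    ∀ x ∈ S, ∀ y ∈ S, x ≠ y → h.Adj x y := by
  classical
  intro x hx y hy hxy
  by_contra hadj
  obtain ⟨⟨hu, hv, hnr⟩, hnbr⟩ := isMinSepPair_iff.mp hS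
  set A : Set V := {w | Reach h S u w} with hA
  set B : Set V := {w | Reach h S v w} with hB
  have hAB : ∀ c ∈ A, ∀ d ∈ B, c ≠ d ∧ ¬ h.Adj c d := by
    intro c hc d hd
    constructor
    · rintro rfl
      exact hnr (hc.trans hd.symm)
    · intro he
      exact hnr (hc.trans ((Reach.of_adj he hc.right_not_mem hd.right_not_mem).trans hd.symm))
  have hconn : ∀ z : V, (∀ s' ∈ S, ∃ a', h.Adj s' a' ∧ Reach h S z a') →
      ∀ (C : Set V), C = {w | Reach h S z w} →
      ∃ p : h.Walk x y, ∀ w ∈ p.support, w ∈ C ∪ {x, y} := by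
    intro z hz C hC
    obtain ⟨a', hxa, hra⟩ := hz x hx
    obtain ⟨b', hyb, hrb⟩ := hz y hy
    obtain ⟨pw, hpw⟩ := hra.symm.trans hrb
    refine ⟨Walk.cons hxa (pw.concat hyb.symm), ?_⟩
    intro w hw
    rw [Walk.support_cons, List.mem_cons] at hw
    rcases hw with rfl | hw
    · exact Or.inr (by simp)
    · rw [Walk.support_concat, List.mem_append] at hw
      rcases hw with hw | hw
      · exact Or.inl (by rw [hC]; exact hra.trans (Reach.to_support hpw hw))
      · simp at hw
        exact Or.inr (by simp [hw])
  obtain ⟨p0, hp0⟩ := hconn u (fun s' hs' => (hnbr s' hs').1) A hA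
  obtain ⟨q0, hq0⟩ := hconn v (fun s' hs' => (hnbr s' hs').2) B hB
  obtain ⟨p, hpPath, hpQ, hpChord⟩ := exists_min_path ⟨p0, hp0⟩
  obtain ⟨q, hqPath, hqQ, hqChord⟩ := exists_min_path ⟨q0, hq0⟩
  have hxA : x ∉ A := fun hc => hc.right_not_mem hx
  have hyA : y ∉ A := fun hc => hc.right_not_mem hy
  have hxB : x ∉ B := fun hc => hc.right_not_mem hx
  have hyB : y ∉ B := fun hc => hc.right_not_mem hy
  -- common support is only x, y
  have hcommon : ∀ w, w ∈ p.support → w ∈ q.support → w = x ∨ w = y := by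
    intro w hwp hwq
    rcases hpQ w hwp with hw | hw
    · rcases hqQ w hwq with hw' | hw'
      · exact absurd rfl (hAB w hw w hw').1
      · simpa using hw'
    · simpa using hw
  -- no common edges
  have hedge : ∀ e, e ∈ p.edges → e ∈ q.edges → False := by
    intro e hep heq
    induction e using Sym2.ind with
    | _ c d =>
      have hc := hcommon c (p.fst_mem_support_of_mem_edges hep) (q.fst_mem_support_of_mem_edges heq)
      have hd := hcommon d (p.snd_mem_support_of_mem_edges hep) (q.snd_mem_support_of_mem_edges heq)
      have hcd : h.Adj c d := p.edges_subset_edgeSet hep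
      rcases hc with rfl | rfl <;> rcases hd with rfl | rfl
      · exact hcd.ne rfl
      · exact hadj hcd
      · exact hadj hcd.symm
      · exact hcd.ne rfl
  have hplen := walk_length_ge_two (p := p) hxy hadj
  have hqlen := walk_length_ge_two (p := q) hxy hadj
  set c : h.Walk x x := p.append q.reverse with hc
  have hcyc : c.IsCycle := by
    rw [Walk.isCycle_def]
    refine ⟨?_, ?_, ?_⟩
    · -- trail
      rw [Walk.isTrail_def, hc, Walk.edges_append, List.nodup_append']
      refine ⟨hpPath.isTrail.edges_nodup, by
          rw [Walk.edges_reverse, List.nodup_reverse]; exact hqPath.isTrail.edges_nodup, ?_⟩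
      intro e hep heq
      rw [Walk.edges_reverse, List.mem_reverse] at heq
      exact hedge e hep heq
    · -- nonempty
      intro hnil
      have := congrArg Walk.length hnil
      rw [hc, Walk.length_append] at this
      simp only [Walk.length_reverse, Walk.length_nil] at this
      omega
    · -- support tail nodup
      rw [hc, Walk.support_append, List.tail_append_of_ne_nil (Walk.support_ne_nil _)]
      rw [List.nodup_append']
      refine ⟨hpPath.support_nodup.tail, ?_, ?_⟩
      · exact (hqPath.reverse.support_nodup).tail
      · intro w hwp hwq
        have hwp' : w ∈ p.support := by
          rw [p.support_eq_cons]; exact List.mem_cons_of_mem _ hwp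
        have hwq' : w ∈ q.support := by
          have : w ∈ q.reverse.support := by
            rw [q.reverse.support_eq_cons]; exact List.mem_cons_of_mem _ hwq
          rwa [Walk.support_reverse, List.mem_reverse] at this
        rcases hcommon w hwp' hwq' with rfl | rfl
        · have := hpPath.support_nodup
          rw [p.support_eq_cons] at this
          exact List.Nodup.notMem this hwp
        · have := hqPath.reverse.support_nodup
          rw [q.reverse.support_eq_cons] at this
          exact List.Nodup.notMem this hwq
  have hclen : 3 < c.length := by
    rw [hc, Walk.length_append, Walk.length_reverse]; omega
  obtain ⟨α, ω, hαs, hωs, hαω, hnotin⟩ := hch x c hcyc hclen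
  rw [hc, Walk.mem_support_append_iff] at hαs hωs
  rw [Walk.support_reverse, List.mem_reverse] at hαs hωs
  have hce : c.edges = p.edges ++ q.edges.reverse := by
    rw [hc, Walk.edges_append, Walk.edges_reverse]
  have hinp : ∀ e ∈ p.edges, e ∈ c.edges := by
    intro e he; rw [hce]; exact List.mem_append_left _ he
  have hinq : ∀ e ∈ q.edges, e ∈ c.edges := by
    intro e he; rw [hce]; exact List.mem_append_right _ (List.mem_reverse.mpr he)
  rcases hαs with hαp | hαq <;> rcases hωs with hωp | hωq
  · exact hnotin (hinp _ (hpChord α ω hαp hωp hαω))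
  · -- α ∈ p, ω ∈ q
    rcases hpQ α hαp with hα | hα
    · rcases hqQ ω hωq with hω | hω
      · exact (hAB α hα ω hω).2 hαω
      · -- ω ∈ {x,y} ⟹ ω ∈ p.support
        have hωp : ω ∈ p.support := by
          rcases (by simpa using hω : ω = x ∨ ω = y) with rfl | rfl
          · exact p.start_mem_support
          · exact p.end_mem_support
        exact hnotin (hinp _ (hpChord α ω hαp hωp hαω))
    · have hαq : α ∈ q.support := by
        rcases (by simpa using hα : α = x ∨ α = y) with rfl | rfl
        · exact q.start_mem_support
        · exact q.end_mem_support
      exact hnotin (hinq _ (hqChord α ω hαq hωq hαω))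
  · -- α ∈ q, ω ∈ p : symmetric
    rcases hpQ ω hωp with hω | hω
    · rcases hqQ α hαq with hα | hα
      · exact (hAB ω hω α hα).2 hαω.symm
      · have hαp : α ∈ p.support := by
          rcases (by simpa using hα : α = x ∨ α = y) with rfl | rfl
          · exact p.start_mem_support
          · exact p.end_mem_support
        exact hnotin (hinp _ (hpChord α ω hαp hωp hαω))
    · have hωq : ω ∈ q.support := by
        rcases (by simpa using hω : ω = x ∨ ω = y) with rfl | rfl
        · exact q.start_mem_support
        · exact q.end_mem_support
      exact hnotin (hinq _ (hqChord α ω hαq hωq hαω))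
  · exact hnotin (hinq _ (hqChord α ω hαq hωq hαω))

end Dirac

section Capped
variable {V : Type} {k h : SimpleGraph V} {S T : Set V} {u v w x y : V}

open SimpleGraph

/-- `h` with all edges between distinct components of `k − S` removed. -/
def capped (h k : SimpleGraph V) (S : Set V) : SimpleGraph V where
  Adj u v := h.Adj u v ∧ (u ∈ S ∨ v ∈ S ∨ Reach k S u v)
  symm := by
    constructor
    rintro u v ⟨hadj, hc⟩
    refine ⟨hadj.symm, ?_⟩
    rcases hc with hc | hc | hc
    · exact Or.inr (Or.inl hc)
    · exact Or.inl hc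
    · exact Or.inr (Or.inr hc.symm)
  loopless := ⟨fun u hu => h.loopless.irrefl u hu.1⟩

lemma capped_adj : (capped h k S).Adj u v ↔ h.Adj u v ∧ (u ∈ S ∨ v ∈ S ∨ Reach k S u v) :=
  Iff.rfl

lemma capped_le : capped h k S ≤ h := fun _ _ hadj => (capped_adj.mp hadj).1

lemma le_capped (hkh : k ≤ h) : k ≤ capped h k S := by
  intro a b hadj
  refine capped_adj.mpr ⟨hkh hadj, ?_⟩
  by_cases haS : a ∈ S
  · exact Or.inl haS
  by_cases hbS : b ∈ S
  · exact Or.inr (Or.inl hbS)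
  · exact Or.inr (Or.inr (Reach.of_adj hadj haS hbS))

lemma mem_tail_of_mem_support_closed {v0 : V} {c : k.Walk v0 v0} (hc : c ≠ Walk.nil)
    (hx : x ∈ c.support) : x ∈ c.support.tail := by
  have hscons := c.support_eq_cons
  have htne : c.support.tail ≠ [] := by
    intro h0
    rw [h0] at hscons
    have : c.support.length = 1 := by rw [hscons]; rfl
    rw [Walk.length_support] at this
    exact hc (Walk.nil_iff_eq_nil.mp (Walk.length_eq_zero_iff.mp (by omega)))
  rw [hscons, List.mem_cons] at hx
  rcases hx with rfl | hx
  · obtain ⟨a, r, har⟩ := List.exists_cons_of_ne_nil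
      (by simpa using htne : c.support.tail.reverse ≠ [])
    have hrev : c.reverse.support = x :: c.reverse.support.tail := c.reverse.support_eq_cons
    rw [Walk.support_reverse, hscons] at hrev
    rw [List.reverse_cons, har] at hrev
    have hax : a = x := (List.cons.injEq _ _ _ _).mp hrev |>.1
    have : a ∈ c.support.tail.reverse := har ▸ List.mem_cons_self (a := a) (l := r)
    rw [List.mem_reverse] at this
    exact hax ▸ this
  · exact hx

lemma capped_walk_reach : ∀ {a b : V} (w : (capped h k S).Walk a b),
    (∀ x ∈ w.support, x ∉ S) → Reach k S a b := by
  intro a b w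
  induction w with
  | nil =>
    intro hw
    exact Reach.rfl (hw _ (Walk.start_mem_support _))
  | cons e rest ih =>
    rename_i aa bb cc
    intro hw
    have ha : aa ∉ S := hw _ (by rw [Walk.support_cons]; simp)
    have hb : bb ∉ S := hw _ (by rw [Walk.support_cons]; simp [Walk.start_mem_support])
    have hr : Reach k S aa bb := by
      rcases (capped_adj.mp e).2 with hc | hc | hc
      · exact absurd hc ha
      · exact absurd hc hb
      · exact hc
    exact hr.trans (ih (fun x hx => hw x (by rw [Walk.support_cons]; simp [hx])))

lemma capped_chordal (hch : IsChordal h)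
    (hcl : ∀ x ∈ S, ∀ y ∈ S, x ≠ y → h.Adj x y) : IsChordal (capped h k S) := by
  classical
  intro v0 c hcyc hlen
  have hsub : ∀ e ∈ c.edges, e ∈ h.edgeSet :=
    fun e he => edgeSet_mono capped_le (c.edges_subset_edgeSet he)
  set ch := c.transfer h hsub with hchdef
  have hsup : ch.support = c.support := c.support_transfer hsub
  have hedg : ch.edges = c.edges := c.edges_transfer hsub
  have hcnil : c ≠ Walk.nil := hcyc.ne_nil
  have hcyc' : ch.IsCycle := by
    rw [Walk.isCycle_def, Walk.isTrail_def, hedg, hsup]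
    rw [Walk.isCycle_def, Walk.isTrail_def] at hcyc
    refine ⟨hcyc.1, ?_, hcyc.2.2⟩
    intro hnil
    have h0 := congrArg Walk.length hnil
    rw [Walk.length_transfer] at h0
    simp only [Walk.length_nil] at h0
    omega
  by_cases hcase : ∀ α ∈ c.support, ∀ ω ∈ c.support, α ∉ S → ω ∉ S → Reach k S α ω
  · obtain ⟨α, ω, hα, hω, hadj, hne⟩ := hch v0 ch hcyc' (by rwa [Walk.length_transfer])
    rw [hsup] at hα hω
    rw [hedg] at hne
    refine ⟨α, ω, hα, hω, capped_adj.mpr ⟨hadj, ?_⟩, hne⟩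
    by_cases h1 : α ∈ S
    · exact Or.inl h1
    by_cases h2 : ω ∈ S
    · exact Or.inr (Or.inl h2)
    · exact Or.inr (Or.inr (hcase α hα ω hω h1 h2))
  · push_neg at hcase
    obtain ⟨α, hαs, ω, hωs, hαS, hωS, hnr⟩ := hcase
    set c' := c.rotate α hαs with hc'def
    have hcyc'' : c'.IsCycle := hcyc.rotate hαs
    have hωt : ω ∈ c.support.tail := mem_tail_of_mem_support_closed hcnil hωs
    have hrotsup := c.support_rotate α hαs
    have hωs' : ω ∈ c'.support := by
      rw [c'.support_eq_cons]
      exact List.mem_cons_of_mem _ (hrotsup.mem_iff.mpr hωt)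
    set p := c'.takeUntil ω hωs' with hpdef
    set q := c'.dropUntil ω hωs' with hqdef
    have hspec : p.append q = c' := c'.take_spec hωs'
    have hsupp : c'.support.tail = p.support.tail ++ q.support.tail := by
      rw [← hspec, Walk.support_append, List.tail_append_of_ne_nil (Walk.support_ne_nil _)]
    have hnodup : (p.support.tail ++ q.support.tail).Nodup := by
      rw [← hsupp]
      exact ((Walk.isCycle_def _).mp hcyc'').2.2
    have hdisj : ∀ z, z ∈ p.support.tail → z ∈ q.support.tail → False := by
      intro z h1 h2
      exact (List.nodup_append'.mp hnodup).2.2 h1 h2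
    obtain ⟨s1, hs1p, hs1S⟩ : ∃ s1 ∈ p.support, s1 ∈ S := by
      by_contra hno
      push_neg at hno
      exact hnr (capped_walk_reach p hno)
    obtain ⟨s2, hs2q, hs2S⟩ : ∃ s2 ∈ q.support, s2 ∈ S := by
      by_contra hno
      push_neg at hno
      exact hnr (capped_walk_reach q hno).symm
    have hs1t : s1 ∈ p.support.tail := by
      rw [p.support_eq_cons, List.mem_cons] at hs1p
      rcases hs1p with rfl | hs1p
      · exact absurd hs1S hαS
      · exact hs1p
    have hs2t : s2 ∈ q.support.tail := by
      rw [q.support_eq_cons, List.mem_cons] at hs2q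
      rcases hs2q with rfl | hs2q
      · exact absurd hs2S hωS
      · exact hs2q
    have hne12 : s1 ≠ s2 := fun he => hdisj s1 hs1t (he ▸ hs2t)
    have htailmem : ∀ z, z ∈ c'.support.tail → z ∈ c.support := by
      intro z hz
      have h1 : z ∈ c.support.tail := hrotsup.mem_iff.mp hz
      rw [c.support_eq_cons]
      exact List.mem_cons_of_mem _ h1
    have hs1c : s1 ∈ c.support := htailmem s1 (by rw [hsupp]; exact List.mem_append_left _ hs1t)
    have hs2c : s2 ∈ c.support := htailmem s2 (by rw [hsupp]; exact List.mem_append_right _ hs2t)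
    have hnotin : s(s1, s2) ∉ c.edges := by
      intro hmem
      have hrot := c.rotate_edges α hαs
      have hmem' : s(s1, s2) ∈ c'.edges := hrot.mem_iff.mpr hmem
      rw [← hspec, Walk.edges_append, List.mem_append] at hmem'
      rcases hmem' with hmem' | hmem'
      · have h2p : s2 ∈ p.support := p.snd_mem_support_of_mem_edges hmem'
        rw [p.support_eq_cons, List.mem_cons] at h2p
        rcases h2p with rfl | h2p
        · exact hαS hs2S
        · exact hdisj s2 h2p hs2t
      · have h1q : s1 ∈ q.support := q.fst_mem_support_of_mem_edges hmem'
        rw [q.support_eq_cons, List.mem_cons] at h1q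
        rcases h1q with rfl | h1q
        · exact hωS hs1S
        · exact hdisj s1 hs1t h1q
    exact ⟨s1, s2, hs1c, hs2c, capped_adj.mpr ⟨hcl s1 hs1S s2 hs2S hne12, Or.inl hs1S⟩, hnotin⟩

lemma minTri_capped_eq (hmt : h ∈ MinTri k)
    (hcl : ∀ x ∈ S, ∀ y ∈ S, x ≠ y → h.Adj x y) : capped h k S = h := by
  by_contra hne
  exact hmt.2.2 _ (le_capped hmt.1) (lt_of_le_of_ne capped_le hne) (capped_chordal hmt.2.1 hcl)

/-- E1′: cliques of a minimal triangulation leave components untouched. -/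
lemma minTri_reach_eq (hmt : h ∈ MinTri k)
    (hcl : ∀ x ∈ S, ∀ y ∈ S, x ≠ y → h.Adj x y) :
    Reach h S u v ↔ Reach k S u v := by
  constructor
  · intro hr
    refine Reach.transfer_down hmt.1 ?_ hr
    intro a b hadj ha hb
    have hca : (capped h k S).Adj a b := by
      rw [minTri_capped_eq hmt hcl]; exact hadj
    rcases (capped_adj.mp hca).2 with hc | hc | hc
    · exact absurd hc ha
    · exact absurd hc hb
    · exact hc
  · exact Reach.mono hmt.1

end Capped

section FillEdge
variable {V : Type} {k h g : SimpleGraph V} {S T : Set V} {u v w x y : V}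

open SimpleGraph

lemma walk_length_one {p : g.Walk x y} (h1 : p.length = 1) : p.edges = [s(x, y)] := by
  cases p with
  | nil => simp at h1
  | cons e q =>
    have hq0 : q.length = 0 := by
      rw [Walk.length_cons] at h1; omega
    have hxy := Walk.eq_of_length_eq_zero hq0
    subst hxy
    have : q = Walk.nil := Walk.nil_iff_eq_nil.mp (Walk.length_eq_zero_iff.mp hq0)
    subst this
    simp

lemma walk_length_two {p : g.Walk x y} (h2 : p.length = 2) :
    ∃ a, ∃ (_ : g.Adj x a) (_ : g.Adj a y),
      p.support = [x, a, y] ∧ p.edges = [s(x, a), s(a, y)] := by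
  cases p with
  | nil => simp at h2
  | cons e q =>
    rename_i m
    cases q with
    | nil => simp at h2
    | cons e2 r =>
      rename_i m2
      have hr0 : r.length = 0 := by
        simp only [Walk.length_cons] at h2; omega
      have hm2 := Walk.eq_of_length_eq_zero hr0
      subst hm2
      have : r = Walk.nil := Walk.nil_iff_eq_nil.mp (Walk.length_eq_zero_iff.mp hr0)
      subst this
      exact ⟨m, e, e2, by simp, by simp⟩

/-- every fill edge of a minimal triangulation is inside a minimal separator. -/
lemma fill_edge_in_minSep [Fintype V] (hmt : h ∈ MinTri k)
    (hxy : h.Adj x y) (hnk : ¬ k.Adj x y) :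
    ∃ T ∈ MinSep h, x ∈ T ∧ y ∈ T := by
  classical
  set hd := h.deleteEdges {s(x, y)} with hhd
  have hkd : k ≤ hd := by
    intro a b hab
    rw [SimpleGraph.deleteEdges_adj]
    refine ⟨hmt.1 hab, ?_⟩
    intro hmem
    rw [Set.mem_singleton_iff, Sym2.eq_iff] at hmem
    rcases hmem with ⟨rfl, rfl⟩ | ⟨rfl, rfl⟩
    · exact hnk hab
    · exact hnk hab.symm
  have hdlt : hd < h := by
    refine lt_of_le_of_ne (SimpleGraph.deleteEdges_le _) ?_
    intro he
    have : hd.Adj x y := he ▸ hxy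
    rw [SimpleGraph.deleteEdges_adj] at this
    exact this.2 rfl
  have hnc : ¬ IsChordal hd := hmt.2.2 hd hkd hdlt
  rw [IsChordal] at hnc
  push_neg at hnc
  obtain ⟨v0, c, hcyc, hlen, hnochord⟩ := hnc
  -- transfer c to h
  have hsub : ∀ e ∈ c.edges, e ∈ h.edgeSet :=
    fun e he => edgeSet_mono (SimpleGraph.deleteEdges_le _) (c.edges_subset_edgeSet he)
  set ch := c.transfer h hsub with hchdef
  have hsup : ch.support = c.support := c.support_transfer hsub
  have hedg : ch.edges = c.edges := c.edges_transfer hsub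
  have hcyc' : ch.IsCycle := by
    rw [Walk.isCycle_def, Walk.isTrail_def, hedg, hsup]
    rw [Walk.isCycle_def, Walk.isTrail_def] at hcyc
    refine ⟨hcyc.1, ?_, hcyc.2.2⟩
    intro hnil
    have h0 := congrArg Walk.length hnil
    rw [Walk.length_transfer] at h0
    simp only [Walk.length_nil] at h0
    omega
  -- star: every h-chord of c is s(x,y)
  have hstar : ∀ α ω, α ∈ c.support → ω ∈ c.support → h.Adj α ω → s(α, ω) ∉ c.edges →
      s(α, ω) = s(x, y) := by
    intro α ω hα hω hadj hne
    by_contra hne2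
    have : hd.Adj α ω := by
      rw [SimpleGraph.deleteEdges_adj]
      exact ⟨hadj, by simpa using hne2⟩
    exact hne (hnochord α ω hα hω this)
  -- x, y on c, s(x,y) not an edge of c
  obtain ⟨α0, ω0, hα0, hω0, hadj0, hne0⟩ := hmt.2.1 v0 ch hcyc' (by rwa [Walk.length_transfer])
  rw [hsup] at hα0 hω0
  rw [hedg] at hne0
  have heq0 : s(α0, ω0) = s(x, y) := hstar α0 ω0 hα0 hω0 hadj0 hne0
  rw [Sym2.eq_iff] at heq0
  have hxc : x ∈ c.support := by
    rcases heq0 with ⟨rfl, rfl⟩ | ⟨rfl, rfl⟩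
    · exact hα0
    · exact hω0
  have hyc : y ∈ c.support := by
    rcases heq0 with ⟨rfl, rfl⟩ | ⟨rfl, rfl⟩
    · exact hω0
    · exact hα0
  have hxyedge : s(x, y) ∉ c.edges := by
    rcases heq0 with ⟨rfl, rfl⟩ | ⟨rfl, rfl⟩
    · exact hne0
    · rw [Sym2.eq_swap]; exact hne0
  clear hα0 hω0 hadj0 hne0 heq0
  -- rotate at x
  set c2 := c.rotate x hxc with hc2def
  have hcyc2 : c2.IsCycle := hcyc.rotate hxc
  have hrotsup := c.support_rotate x hxc
  have hrotedg := c.rotate_edges x hxc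
  have hyt : y ∈ c.support.tail := mem_tail_of_mem_support_closed hcyc.ne_nil hyc
  have hyc2 : y ∈ c2.support := by
    rw [c2.support_eq_cons]
    exact List.mem_cons_of_mem _ (hrotsup.mem_iff.mpr hyt)
  set p := c2.takeUntil y hyc2 with hpdef
  set q := c2.dropUntil y hyc2 with hqdef
  have hspec : p.append q = c2 := c2.take_spec hyc2
  have hedges2 : c2.edges = p.edges ++ q.edges := by
    rw [← hspec, Walk.edges_append]
  have hsupp2 : c2.support.tail = p.support.tail ++ q.support.tail := by
    rw [← hspec, Walk.support_append, List.tail_append_of_ne_nil (Walk.support_ne_nil _)]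
  have hnodup2 : (p.support.tail ++ q.support.tail).Nodup := by
    rw [← hsupp2]; exact ((Walk.isCycle_def _).mp hcyc2).2.2
  have hedgenodup : (p.edges ++ q.edges).Nodup := by
    rw [← hedges2]; exact ((Walk.isCycle_def _).mp hcyc2).1.edges_nodup
  have hdisj : ∀ z, z ∈ p.support.tail → z ∈ q.support.tail → False :=
    fun z h1 h2 => (List.nodup_append'.mp hnodup2).2.2 h1 h2
  have hxy' : x ≠ y := hxy.ne
  have hxyc2 : s(x, y) ∉ c2.edges := fun hm => hxyedge (hrotedg.mem_iff.mp hm)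
  -- common support of p and q is {x, y}
  have hcommon : ∀ z, z ∈ p.support → z ∈ q.support → z = x ∨ z = y := by
    intro z h1 h2
    rw [p.support_eq_cons, List.mem_cons] at h1
    rw [q.support_eq_cons, List.mem_cons] at h2
    rcases h1 with rfl | h1
    · exact Or.inl rfl
    rcases h2 with rfl | h2
    · exact Or.inr rfl
    · exact absurd h2 (fun h2 => hdisj z h1 h2)
  -- p and q have length ≥ 2
  have hplen : 2 ≤ p.length := by
    rcases Nat.lt_or_ge p.length 2 with hl | hl
    · interval_cases hll : p.length
      · exact absurd (Walk.eq_of_length_eq_zero hll) hxy'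
      · exact absurd (hedges2 ▸ List.mem_append_left q.edges
          ((walk_length_one hll) ▸ List.mem_singleton_self _)) hxyc2
    · exact hl
  have hqlen : 2 ≤ q.length := by
    rcases Nat.lt_or_ge q.length 2 with hl | hl
    · interval_cases hll : q.length
      · exact absurd (Walk.eq_of_length_eq_zero hll).symm hxy'
      · refine absurd (hedges2 ▸ List.mem_append_right p.edges ?_) hxyc2
        rw [walk_length_one hll]
        simp [Sym2.eq_swap]
    · exact hl
  -- y in tail of p, x in tail of q
  have hyinp : y ∈ p.support.tail := Walk.end_mem_tail_support_of_ne hxy' p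
  have hxinq : x ∈ q.support.tail := Walk.end_mem_tail_support_of_ne (Ne.symm hxy') q
  -- memberships into c.support
  have hc2c : ∀ z, z ∈ c2.support → z ∈ c.support := by
    intro z hz
    rw [c2.support_eq_cons, List.mem_cons] at hz
    rcases hz with rfl | hz
    · exact hxc
    · rw [c.support_eq_cons]
      exact List.mem_cons_of_mem _ (hrotsup.mem_iff.mp hz)
  have hpc : ∀ z, z ∈ p.support → z ∈ c.support :=
    fun z hz => hc2c z (Walk.support_takeUntil_subset _ _ hz)
  have hqc : ∀ z, z ∈ q.support → z ∈ c.support :=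
    fun z hz => hc2c z (Walk.support_dropUntil_subset _ _ hz)
  -- transfers of p and q into h
  have hp_sub : ∀ e ∈ p.edges, e ∈ h.edgeSet :=
    fun e he => hsub e (hrotedg.mem_iff.mp (hedges2 ▸ List.mem_append_left _ he))
  have hq_sub : ∀ e ∈ q.edges, e ∈ h.edgeSet :=
    fun e he => hsub e (hrotedg.mem_iff.mp (hedges2 ▸ List.mem_append_right _ he))
  set ph := p.transfer h hp_sub with hphdef
  set qh := q.transfer h hq_sub with hqhdef
  have hpsup : ph.support = p.support := p.support_transfer hp_sub
  have hqsup : qh.support = q.support := q.support_transfer hq_sub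
  have hpedg : ph.edges = p.edges := p.edges_transfer hp_sub
  have hqedg : qh.edges = q.edges := q.edges_transfer hq_sub
  have hpnodup : p.support.tail.Nodup := (List.nodup_append'.mp hnodup2).1
  have hqnodup : q.support.tail.Nodup := (List.nodup_append'.mp hnodup2).2.1
  have hpenodup : p.edges.Nodup := (List.nodup_append'.mp hedgenodup).1
  have hqenodup : q.edges.Nodup := (List.nodup_append'.mp hedgenodup).2.1
  have hxp : s(x, y) ∉ p.edges :=
    fun hm => hxyc2 (hedges2 ▸ List.mem_append_left _ hm)
  have hxq : s(x, y) ∉ q.edges :=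
    fun hm => hxyc2 (hedges2 ▸ List.mem_append_right _ hm)
  -- p has length exactly 2
  have hp2 : p.length = 2 := by
    by_contra hne2
    have h3 : 3 ≤ p.length := by omega
    set c1 : h.Walk x x := ph.append (Walk.cons hxy.symm Walk.nil) with hc1def
    have hc1sup : c1.support = p.support ++ [x] := by
      rw [hc1def, Walk.support_append, hpsup]
      rfl
    have hc1edg : c1.edges = p.edges ++ [s(y, x)] := by
      rw [hc1def, Walk.edges_append, hpedg]
      rfl
    have hc1cyc : c1.IsCycle := by
      rw [Walk.isCycle_def, Walk.isTrail_def, hc1edg]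
      refine ⟨?_, ?_, ?_⟩
      · rw [List.nodup_append']
        refine ⟨hpenodup, List.nodup_singleton _, ?_⟩
        intro e he1 he2
        rw [List.mem_singleton] at he2
        subst he2
        exact hxp (Sym2.eq_swap ▸ he1)
      · intro h0
        have := congrArg Walk.length h0
        rw [hc1def, Walk.length_append, Walk.length_transfer] at this
        simp at this
      · rw [hc1sup, List.tail_append_of_ne_nil (Walk.support_ne_nil _), List.nodup_append']
        refine ⟨by rw [p.support_eq_cons]; exact hpnodup, List.nodup_singleton _, ?_⟩
        intro z hz1 hz2
        rw [List.mem_singleton] at hz2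
        subst hz2
        have : z ∈ p.support.tail := by
          have := p.support_eq_cons ▸ hz1
          simpa using hz1
        exact hdisj z this hxinq
    have hc1len : 3 < c1.length := by
      rw [hc1def, Walk.length_append, Walk.length_transfer]
      simp only [Walk.length_cons, Walk.length_nil]
      omega
    obtain ⟨α, ω, hα, hω, hadj, hnein⟩ := hmt.2.1 x c1 hc1cyc hc1len
    have hαp : α ∈ p.support := by
      rw [hc1sup, List.mem_append] at hα
      rcases hα with hα | hα
      · exact hα
      · rw [List.mem_singleton] at hα
        exact hα ▸ p.start_mem_support
    have hωp : ω ∈ p.support := by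
      rw [hc1sup, List.mem_append] at hω
      rcases hω with hω | hω
      · exact hω
      · rw [List.mem_singleton] at hω
        exact hω ▸ p.start_mem_support
    rw [hc1edg] at hnein
    have hnp : s(α, ω) ∉ p.edges := fun hm => hnein (List.mem_append_left _ hm)
    have hnxy : s(α, ω) ≠ s(x, y) := by
      intro he
      exact hnein (List.mem_append_right _ (by rw [he, Sym2.eq_swap]; exact List.mem_singleton_self _))
    have hnq : s(α, ω) ∉ q.edges := by
      intro hm
      have hαq := q.fst_mem_support_of_mem_edges hm
      have hωq := q.snd_mem_support_of_mem_edges hm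
      rcases hcommon α hαp hαq with rfl | rfl <;> rcases hcommon ω hωp hωq with rfl | rfl
      · exact hadj.ne rfl
      · exact hnxy rfl
      · exact hnxy Sym2.eq_swap
      · exact hadj.ne rfl
    have hnc : s(α, ω) ∉ c.edges := by
      intro hm
      have : s(α, ω) ∈ c2.edges := hrotedg.mem_iff.mpr hm
      rw [hedges2, List.mem_append] at this
      exact this.elim hnp hnq
    exact hnxy (hstar α ω (hpc α hαp) (hpc ω hωp) hadj hnc)
  -- q has length exactly 2
  have hq2 : q.length = 2 := by
    by_contra hne2
    have h3 : 3 ≤ q.length := by omega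
    set c3 : h.Walk y y := qh.append (Walk.cons hxy Walk.nil) with hc3def
    have hc3sup : c3.support = q.support ++ [y] := by
      rw [hc3def, Walk.support_append, hqsup]
      rfl
    have hc3edg : c3.edges = q.edges ++ [s(x, y)] := by
      rw [hc3def, Walk.edges_append, hqedg]
      rfl
    have hc3cyc : c3.IsCycle := by
      rw [Walk.isCycle_def, Walk.isTrail_def, hc3edg]
      refine ⟨?_, ?_, ?_⟩
      · rw [List.nodup_append']
        refine ⟨hqenodup, List.nodup_singleton _, ?_⟩
        intro e he1 he2
        rw [List.mem_singleton] at he2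
        subst he2
        exact hxq he1
      · intro h0
        have := congrArg Walk.length h0
        rw [hc3def, Walk.length_append, Walk.length_transfer] at this
        simp at this
      · rw [hc3sup, List.tail_append_of_ne_nil (Walk.support_ne_nil _), List.nodup_append']
        refine ⟨by rw [q.support_eq_cons]; exact hqnodup, List.nodup_singleton _, ?_⟩
        intro z hz1 hz2
        rw [List.mem_singleton] at hz2
        subst hz2
        have : z ∈ q.support.tail := by simpa using hz1
        exact hdisj z hyinp this
    have hc3len : 3 < c3.length := by
      rw [hc3def, Walk.length_append, Walk.length_transfer]
      simp only [Walk.length_cons, Walk.length_nil]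
      omega
    obtain ⟨α, ω, hα, hω, hadj, hnein⟩ := hmt.2.1 y c3 hc3cyc hc3len
    have hαq : α ∈ q.support := by
      rw [hc3sup, List.mem_append] at hα
      rcases hα with hα | hα
      · exact hα
      · rw [List.mem_singleton] at hα
        exact hα ▸ q.start_mem_support
    have hωq : ω ∈ q.support := by
      rw [hc3sup, List.mem_append] at hω
      rcases hω with hω | hω
      · exact hω
      · rw [List.mem_singleton] at hω
        exact hω ▸ q.start_mem_support
    rw [hc3edg] at hnein
    have hnq : s(α, ω) ∉ q.edges := fun hm => hnein (List.mem_append_left _ hm)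
    have hnxy : s(α, ω) ≠ s(x, y) := by
      intro he
      exact hnein (List.mem_append_right _ (by rw [he]; exact List.mem_singleton_self _))
    have hnp : s(α, ω) ∉ p.edges := by
      intro hm
      have hαp := p.fst_mem_support_of_mem_edges hm
      have hωp := p.snd_mem_support_of_mem_edges hm
      rcases hcommon α hαp hαq with rfl | rfl <;> rcases hcommon ω hωp hωq with rfl | rfl
      · exact hadj.ne rfl
      · exact hnxy rfl
      · exact hnxy Sym2.eq_swap
      · exact hadj.ne rfl
    have hnc : s(α, ω) ∉ c.edges := by
      intro hm
      have : s(α, ω) ∈ c2.edges := hrotedg.mem_iff.mpr hm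
      rw [hedges2, List.mem_append] at this
      exact this.elim hnp hnq
    exact hnxy (hstar α ω (hqc α hαq) (hqc ω hωq) hadj hnc)
  -- extract the 4-cycle x a y b
  obtain ⟨a, hxa, hay, hsupP, hedgP⟩ := walk_length_two hp2
  obtain ⟨b, hyb, hbx, hsupQ, hedgQ⟩ := walk_length_two hq2
  have hptail : p.support.tail = [a, y] := by rw [hsupP]; rfl
  have hqtail : q.support.tail = [b, x] := by rw [hsupQ]; rfl
  have hab : a ≠ b := by
    intro he
    exact hdisj a (by rw [hptail]; simp) (by rw [hqtail, he]; simp)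
  have hax : a ≠ x := by
    intro he
    exact hdisj a (by rw [hptail]; simp) (by rw [hqtail, he]; simp)
  have hay' : a ≠ y := by
    have := hptail ▸ hpnodup
    simpa using this
  have hbx' : b ≠ x := by
    have := hqtail ▸ hqnodup
    simpa using this
  have hby : b ≠ y := by
    intro he
    exact hdisj b (by rw [hptail, he]; simp) (by rw [hqtail]; simp)
  have hamem : a ∈ c.support := hpc a (by rw [hsupP]; simp)
  have hbmem : b ∈ c.support := hqc b (by rw [hsupQ]; simp)
  have hnadj : ¬ h.Adj a b := by
    intro hadj
    have hnc : s(a, b) ∉ c.edges := by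
      intro hm
      have h2 : s(a, b) ∈ p.edges ++ q.edges := hedges2 ▸ hrotedg.mem_iff.mpr hm
      rw [hedgP, hedgQ] at h2
      simp only [List.mem_append, List.mem_cons, List.mem_singleton, List.not_mem_nil,
        or_false, Sym2.eq_iff] at h2
      tauto
    have := hstar a b hamem hbmem hadj hnc
    rw [Sym2.eq_iff] at this
    rcases this with ⟨rfl, rfl⟩ | ⟨rfl, rfl⟩
    · exact hax rfl
    · exact hay' rfl
  -- a minimal (a,b)-separator of h must contain x and y
  have hafull : IsSep h a b {z | z ≠ a ∧ z ≠ b} := by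
    rw [isSep_iff]
    refine ⟨by simp, by simp, ?_⟩
    rintro ⟨pw, hpw⟩
    cases pw with
    | nil => exact hab rfl
    | cons e rest =>
      rename_i m
      have hm := hpw m (by rw [Walk.support_cons]; simp [Walk.start_mem_support])
      simp only [Set.mem_setOf_eq, not_and_or, not_not] at hm
      rcases hm with rfl | rfl
      · exact e.ne rfl
      · exact hnadj e
  obtain ⟨S0, hS0sub, hS0min⟩ := exists_minSepPair_subset hafull
  have haS0 : a ∉ S0 := fun hm => (hS0sub hm).1 rfl
  have hbS0 : b ∉ S0 := fun hm => (hS0sub hm).2 rfl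
  have hhxa : h.Adj x a := (SimpleGraph.deleteEdges_le _) hxa
  have hhay : h.Adj a y := (SimpleGraph.deleteEdges_le _) hay
  have hhyb : h.Adj y b := (SimpleGraph.deleteEdges_le _) hyb
  have hhbx : h.Adj b x := (SimpleGraph.deleteEdges_le _) hbx
  have hxS0 : x ∈ S0 := by
    by_contra hxm
    have hr : Reach h S0 a b :=
      (Reach.of_adj hhxa.symm haS0 hxm).trans (Reach.of_adj hhbx.symm hxm hbS0)
    exact (isSep_iff.mp hS0min.1).2.2 hr
  have hyS0 : y ∈ S0 := by
    by_contra hym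
    have hr : Reach h S0 a b :=
      (Reach.of_adj hhay haS0 hym).trans (Reach.of_adj hhyb hym hbS0)
    exact (isSep_iff.mp hS0min.1).2.2 hr
  exact ⟨S0, ⟨a, b, hS0min⟩, hxS0, hyS0⟩

end FillEdge

section Assembly
variable {V : Type} {g h h' : SimpleGraph V} {φ : Set (Set V)} {S T : Set V} {u v a b : V}

open SimpleGraph

lemma le_satSet : g ≤ satSet g φ := fun _ _ hadj => Or.inl hadj

lemma satSet_clique (hS : S ∈ φ) : ∀ x ∈ S, ∀ y ∈ S, x ≠ y → (satSet g φ).Adj x y :=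
  fun x hx y hy hxy => Or.inr ⟨hxy, S, hS, hx, hy⟩

lemma satSet_le (hle : g ≤ h') (hcl : ∀ S ∈ φ, ∀ x ∈ S, ∀ y ∈ S, x ≠ y → h'.Adj x y) :
    satSet g φ ≤ h' := by
  rintro a b (hadj | ⟨hne, S, hS, ha, hb⟩)
  · exact hle hadj
  · exact hcl S hS a ha b hb hne

lemma reach_satSet (hφ : PairwiseParallel g φ) (hS : S ∈ φ) :
    Reach (satSet g φ) S u v ↔ Reach g S u v := by
  constructor
  · refine Reach.transfer_down le_satSet ?_
    rintro a b (hadj | ⟨hne, T, hT, haT, hbT⟩) ha hb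
    · exact Reach.of_adj hadj ha hb
    · by_cases hTS : T = S
      · exact absurd (hTS ▸ haT) ha
      · exact reach_of_not_crosses (hφ.2 hS hT (fun he => hTS he.symm)) haT hbT ha hb
  · exact Reach.mono le_satSet

lemma minSepPair_transfer (hle : g ≤ h')
    (hequiv : ∀ a b, Reach h' S a b ↔ Reach g S a b)
    (hmin : IsMinSepPair g u v S) : IsMinSepPair h' u v S := by
  rw [isMinSepPair_iff] at hmin ⊢
  obtain ⟨⟨hu, hv, hnr⟩, hnbr⟩ := hmin
  refine ⟨⟨hu, hv, fun hr => hnr ((hequiv u v).mp hr)⟩, fun s hs => ?_⟩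
  obtain ⟨⟨c, hc1, hc2⟩, ⟨d, hd1, hd2⟩⟩ := hnbr s hs
  exact ⟨⟨c, hle hc1, (hequiv u c).mpr hc2⟩, ⟨d, hle hd1, (hequiv v d).mpr hd2⟩⟩

theorem extendInd_correct' [Fintype V] (hφ : PairwiseParallel g φ)
    (hh : h ∈ MinTri (satSet g φ)) :
    h ∈ MinTri g ∧ MaxPairwiseParallel g (MinSep h) ∧ φ ⊆ MinSep h := by
  classical
  have hgh : g ≤ h := le_trans le_satSet hh.1
  -- key1: components of φ-members are preserved in h
  have key1 : ∀ S ∈ φ, ∀ a b, Reach h S a b ↔ Reach g S a b := by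
    intro S hS a b
    have hcl : ∀ x ∈ S, ∀ y ∈ S, x ≠ y → h.Adj x y :=
      fun x hx y hy hxy => hh.1 (satSet_clique hS x hx y hy hxy)
    exact (minTri_reach_eq hh hcl).trans (reach_satSet hφ hS)
  -- (2) φ ⊆ MinSep h
  have hφsub : φ ⊆ MinSep h := by
    intro S hS
    obtain ⟨u, v, hmp⟩ := hφ.1 hS
    exact ⟨u, v, minSepPair_transfer hgh (key1 S hS) hmp⟩
  -- key2: components of h-cliques are preserved
  have key2 : ∀ T : Set V, (∀ x ∈ T, ∀ y ∈ T, x ≠ y → h.Adj x y) →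
      ∀ a b, Reach h T a b ↔ Reach g T a b := by
    intro T hclT a b
    refine (minTri_reach_eq hh hclT).trans ⟨?_, Reach.mono le_satSet⟩
    refine Reach.transfer_down le_satSet ?_
    rintro c d (hadj | ⟨hne, S, hSφ, hcS, hdS⟩) hc hd
    · exact Reach.of_adj hadj hc hd
    · -- c,d ∈ S \ T : use the flip lemma
      obtain ⟨u, v, hmpS⟩ := hφ.1 hSφ
      have hflip := parallel_flip hmpS (T := T) ?_
      · exact hflip c hcS d hdS hc hd
      · intro x hxT y hyT hxS hyS
        by_cases hxy : x = y
        · exact hxy ▸ Reach.rfl hxS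
        · exact (key1 S hSφ x y).mp (Reach.of_adj (hclT x hxT y hyT hxy) hxS hyS)
  -- cliques of MinSep h
  have hclT : ∀ T ∈ MinSep h, ∀ x ∈ T, ∀ y ∈ T, x ≠ y → h.Adj x y := by
    rintro T ⟨u, v, hmp⟩
    exact clique_of_minSepPair_chordal hh.2.1 hmp
  -- (5) MinSep h ⊆ MinSep g
  have hsubg : ∀ T ∈ MinSep h, ∀ u v, IsMinSepPair h u v T → IsMinSepPair g u v T := by
    intro T hT u v hmp
    have hkey := key2 T (hclT T hT)
    obtain ⟨hu, hv, hnr⟩ := isSep_iff.mp hmp.1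
    constructor
    · exact isSep_iff.mpr ⟨hu, hv, fun hr => hnr ((hkey u v).mpr hr)⟩
    · intro S' hS' hsep'
      obtain ⟨hu', hv', hnr'⟩ := isSep_iff.mp hsep'
      have hclS' : ∀ x ∈ S', ∀ y ∈ S', x ≠ y → h.Adj x y :=
        fun x hx y hy hxy => hclT T hT x (hS'.subset hx) y (hS'.subset hy) hxy
      have hkey' := key2 S' hclS'
      exact hmp.2 S' hS' (isSep_iff.mpr ⟨hu', hv', fun hr => hnr' ((hkey' u v).mp hr)⟩)
  have hMinSepSub : MinSep h ⊆ MinSep g := by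
    rintro T ⟨u, v, hmp⟩
    exact ⟨u, v, hsubg T ⟨u, v, hmp⟩ u v hmp⟩
  -- (6) pairwise parallel
  have hpp : PairwiseParallel g (MinSep h) := by
    refine ⟨hMinSepSub, ?_⟩
    intro T1 hT1 T2 hT2 hne12
    rintro ⟨c, hcT2, d, hdT2, hsep⟩
    obtain ⟨hc, hd, hnr⟩ := isSep_iff.mp hsep
    refine hnr ?_
    by_cases hcd : c = d
    · exact hcd ▸ Reach.rfl hc
    · exact (key2 T1 (hclT T1 hT1) c d).mp
        (Reach.of_adj (hclT T2 hT2 c hcT2 d hdT2 hcd) hc hd)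
  -- (7) h is a minimal triangulation of g
  have hMinTri : h ∈ MinTri g := by
    refine ⟨hgh, hh.2.1, fun h' hgh' hlt hch' => ?_⟩
    refine hh.2.2 h' (satSet_le hgh' ?_) hlt hch'
    intro S hS
    obtain ⟨u, v, hmp⟩ := hφ.1 hS
    rw [isMinSepPair_iff] at hmp
    obtain ⟨⟨hu, hv, hnr⟩, hnbr⟩ := hmp
    have hmph' : IsMinSepPair h' u v S := by
      rw [isMinSepPair_iff]
      refine ⟨⟨hu, hv, ?_⟩, ?_⟩
      · intro hr
        exact hnr ((key1 S hS u v).mp (Reach.mono hlt.le hr))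
      · intro s hs
        obtain ⟨⟨c, hc1, hc2⟩, ⟨d, hd1, hd2⟩⟩ := hnbr s hs
        exact ⟨⟨c, hgh' hc1, Reach.mono hgh' hc2⟩, ⟨d, hgh' hd1, Reach.mono hgh' hd2⟩⟩
    exact clique_of_minSepPair_chordal hch' hmph'
  -- (8) maximality
  refine ⟨hMinTri, ⟨hpp, ?_⟩, hφsub⟩
  intro ψ hψ hsubψ
  refine Set.Subset.antisymm hsubψ ?_
  intro R hR
  obtain ⟨u, v, hmpR⟩ := hψ.1 hR
  have keyR : ∀ a' b', Reach h R a' b' ↔ Reach g R a' b' := by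
    intro a' b'
    constructor
    · refine Reach.transfer_down hgh ?_
      intro c d hadj hc hd
      by_cases hgcd : g.Adj c d
      · exact Reach.of_adj hgcd hc hd
      · have hfill : ∃ T ∈ MinSep h, c ∈ T ∧ d ∈ T := by
          by_cases hG' : (satSet g φ).Adj c d
          · rcases hG' with hadj' | ⟨hne, S, hSφ, hcS, hdS⟩
            · exact absurd hadj' hgcd
            · exact ⟨S, hφsub hSφ, hcS, hdS⟩
          · exact fill_edge_in_minSep hh hadj hG'
        obtain ⟨T, hT, hcT, hdT⟩ := hfill
        by_cases hTR : T = R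
        · exact absurd (hTR ▸ hcT) hc
        · exact reach_of_not_crosses (hψ.2 hR (hsubψ hT) (fun he => hTR he.symm))
            hcT hdT hc hd
    · exact Reach.mono hgh
  exact ⟨u, v, minSepPair_transfer hgh keyR hmpR⟩

end Assembly

/-- A minimal triangulation `h` of `g_[φ]` is a minimal triangulation of `g`, and
`MinSep h` is a maximal pairwise parallel set of minimal separators of `g`
containing `φ`. -/
theorem extendInd_correct {V : Type} [Fintype V] (g : SimpleGraph V)
    (φ : Set (Set V)) (hφ : PairwiseParallel g φ)
    (h : SimpleGraph V) (hh : h ∈ MinTri (satSet g φ)) :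
    h ∈ MinTri g ∧ MaxPairwiseParallel g (MinSep h) ∧ φ ⊆ MinSep h := by
  exact extendInd_correct' hφ hh
end

section
/- Let g be a connected finite simple graph and let S be a minimal separator of g whose vertices are pairwise adjacent (a clique). Then for every connected component c of g − S and every subset S' ⊆ S, the set S' is not a minimal separator of the induced subgraph g[c ∪ N_g(c)]. -/
open SimpleGraph

/-- If `S` is a clique minimal separator of a connected graph `g`, then neither `S`
nor any of its subsets is a minimal separator of `g[c ∪ N_g(c)]` for any connected
component `c` of `g − S`. -/
theorem clique_sep_not_minSep_in_components {V : Type} [Fintype V]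
    (g : SimpleGraph V) (hconn : g.Connected)
    (S : Set V) (hS : S ∈ MinSep g) (hclq : g.IsClique S)
    (c : Set V) (hc : IsCompOf g S c) (S' : Set V) (hS' : S' ⊆ S) :
    ∀ T ∈ MinSep (g.induce (c ∪ nbhd g c)), Subtype.val '' T ≠ S' := by
  intro T hT heq
  obtain ⟨u, v, ⟨hu, hv, hnr⟩, -⟩ := hT
  apply hnr
  -- setup
  obtain ⟨hcS, hcConn, hcClosed⟩ := hc
  have hmemT : ∀ w : {x // x ∈ c ∪ nbhd g c}, w ∈ T ↔ (w : V) ∈ S' := by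
    intro w
    constructor
    · intro hw; rw [← heq]; exact ⟨w, hw, rfl⟩
    · intro hw; rw [← heq] at hw
      obtain ⟨t, ht, hval⟩ := hw
      exact Subtype.ext hval ▸ ht
  have hcT : ∀ x (hx : x ∈ c), (⟨x, Or.inl hx⟩ : {x // x ∈ c ∪ nbhd g c}) ∈ Tᶜ := by
    intro x hx hmem
    exact (hcS hx) (hS' ((hmemT _).1 hmem))
  -- the graph we work in
  set K := ((g.induce (c ∪ nbhd g c)).induce Tᶜ) with hK
  -- embed c-vertices
  let emb : ∀ x (hx : x ∈ c), {w : {x // x ∈ c ∪ nbhd g c} // w ∈ Tᶜ} :=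
    fun x hx => ⟨⟨x, Or.inl hx⟩, hcT x hx⟩
  -- adjacency in g between c-vertices transfers to K
  have hKadj : ∀ x (hx : x ∈ c) y (hy : y ∈ c), g.Adj x y → K.Adj (emb x hx) (emb y hy) := by
    intro x hx y hy hadj
    exact hadj
  -- reachability within c transfers to K
  have hreachC : ∀ x (hx : x ∈ c) y (hy : y ∈ c), K.Reachable (emb x hx) (emb y hy) := by
    intro x hx y hy
    exact (hcConn ⟨x, hx⟩ ⟨y, hy⟩).map
      ⟨fun z => emb z.1 z.2, fun {a b} hab => hKadj a.1 a.2 b.1 b.2 hab⟩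
  -- every vertex of K reaches some embedded c-vertex
  have hstep : ∀ w : {w : {x // x ∈ c ∪ nbhd g c} // w ∈ Tᶜ},
      ∃ x, ∃ hx : x ∈ c, K.Reachable w (emb x hx) := by
    intro w
    rcases w.1.2 with hwc | hwn
    · refine ⟨w.1.1, hwc, ?_⟩
      have : w = emb w.1.1 hwc := by
        apply Subtype.ext; apply Subtype.ext; rfl
      rw [← this]
    · obtain ⟨-, x, hx, hadj⟩ := hwn
      refine ⟨x, hx, ?_⟩
      have : K.Adj w (emb x hx) := hadj.symm
      exact this.reachable
  obtain ⟨x, hx, hux⟩ := hstep ⟨u, hu⟩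
  obtain ⟨y, hy, hvy⟩ := hstep ⟨v, hv⟩
  exact hux.trans ((hreachC x hx y hy).trans hvy.symm)
end

section
/- Let g be a connected finite simple graph, let φ be a set of pairwise parallel minimal separators of g, and let S ∈ φ be such that the vertices of S are pairwise adjacent in g (a clique). Then for every S' ∈ φ with S' ≠ S, there exists a connected component c of g − S such that S' ⊆ c ∪ N_g(c). -/
open SimpleGraph

section AuxLemmas

private lemma reach_of_mem_support {W : Type} {h : SimpleGraph W} :
    ∀ {a b : W} (p : h.Walk a b) {x : W}, x ∈ p.support → h.Reachable a x := by
  intro a b p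
  induction p with
  | nil =>
    intro x hx
    simp only [SimpleGraph.Walk.support_nil, List.mem_singleton] at hx
    subst hx; exact SimpleGraph.Reachable.refl _
  | cons hadj q ih =>
    intro x hx
    rw [SimpleGraph.Walk.support_cons] at hx
    rcases List.mem_cons.mp hx with rfl | hx
    · exact SimpleGraph.Reachable.refl _
    · exact hadj.reachable.trans (ih hx)

private lemma reach_transfer {V : Type} (g : SimpleGraph V) {A B : Set V} :
    ∀ {a b : A} (p : (g.induce A).Walk a b)
      (hp : ∀ x ∈ p.support, (x : V) ∈ B),
      (g.induce B).Reachable ⟨a.1, hp a p.start_mem_support⟩ ⟨b.1, hp b p.end_mem_support⟩ := by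
  intro a b p
  induction p with
  | nil => intro hp; exact SimpleGraph.Reachable.refl _
  | @cons a c b hadj q ih =>
    intro hp
    have h1 : (a : V) ∈ B := hp a (SimpleGraph.Walk.start_mem_support _)
    have h2 : (c : V) ∈ B := hp c (by simp [SimpleGraph.Walk.support_cons])
    have hadj' : (g.induce B).Adj ⟨a.1, h1⟩ ⟨c.1, h2⟩ := by
      simp only [SimpleGraph.comap_adj] at hadj ⊢
      exact hadj
    exact hadj'.reachable.trans
      (ih (fun x hx => hp x (by simp [SimpleGraph.Walk.support_cons, hx])))

private lemma IsSep_symm {V : Type} {g : SimpleGraph V} {u v : V} {S : Set V}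
    (h : IsSep g u v S) : IsSep g v u S := by
  obtain ⟨h1, h2, h3⟩ := h
  exact ⟨h2, h1, fun r => h3 r.symm⟩

private lemma core_lemma {V : Type} (g : SimpleGraph V)
    {S S' : Set V} (hclq : g.IsClique S)
    {u v : V} (hmin : IsMinSepPair g u v S')
    (hu : u ∈ S'ᶜ) (hv : v ∈ S'ᶜ)
    (hdisj : ∀ (w : V) (hw : w ∈ S'ᶜ),
      (g.induce S'ᶜ).Reachable ⟨u, hu⟩ ⟨w, hw⟩ → w ∉ S) :
    ∃ c : Set V, IsCompOf g S c ∧ S' ⊆ c ∪ nbhd g c := by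
  obtain ⟨hu0, hv0, hsep⟩ := hmin.1
  -- the component of u in g - S'
  set C : Set V := {w | ∃ hw : w ∈ S'ᶜ, (g.induce S'ᶜ).Reachable ⟨u, hu⟩ ⟨w, hw⟩} with hC
  have huS : u ∈ Sᶜ := hdisj u hu (SimpleGraph.Reachable.refl _)
  -- the component of u in g - S
  set c : Set V := {w | ∃ hw : w ∈ Sᶜ, (g.induce Sᶜ).Reachable ⟨u, huS⟩ ⟨w, hw⟩} with hc
  have hcsub : c ⊆ Sᶜ := fun w hw => hw.1
  have huc : u ∈ c := ⟨huS, SimpleGraph.Reachable.refl _⟩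
  -- closure property
  have hclose : ∀ w ∈ c, ∀ z : V, z ∉ S → g.Adj w z → z ∈ c := by
    intro w hw z hz hadj
    obtain ⟨hwS, hr⟩ := hw
    refine ⟨hz, hr.trans ?_⟩
    exact SimpleGraph.Adj.reachable (by simpa [SimpleGraph.comap_adj] using hadj)
  -- connectedness of the induced graph on c
  have hreach_u : ∀ x (hx : x ∈ c), (g.induce c).Reachable ⟨u, huc⟩ ⟨x, hx⟩ := by
    intro x hx
    obtain ⟨hxS, hr⟩ := hx
    obtain ⟨p⟩ := hr
    have hp : ∀ y ∈ p.support, (y : V) ∈ c := by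
      intro y hy
      exact ⟨y.2, reach_of_mem_support p hy⟩
    exact reach_transfer g p hp
  have hconn_c : (g.induce c).Connected := by
    rw [SimpleGraph.connected_iff]
    refine ⟨?_, ⟨⟨u, huc⟩⟩⟩
    intro x y
    have hx := hreach_u x.1 x.2
    have hy := hreach_u y.1 y.2
    exact hx.symm.trans hy
  -- C ⊆ c
  have hCc : C ⊆ c := by
    intro w hw
    obtain ⟨hwS', hr⟩ := hw
    obtain ⟨p⟩ := hr
    have hp : ∀ y ∈ p.support, (y : V) ∈ Sᶜ := by
      intro y hy
      exact hdisj y.1 y.2 (reach_of_mem_support p hy)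
    exact ⟨hp _ p.end_mem_support, reach_transfer g p hp⟩
  -- every vertex of S' has a neighbor in C
  have hA : ∀ x ∈ S', ∃ a ∈ C, g.Adj x a := by
    intro x hx
    by_contra hno
    push_neg at hno
    have hsub : S' \ {x} ⊂ S' := by
      constructor
      · exact Set.diff_subset
      · intro hcon
        exact (hcon hx).2 rfl
    have hnot := hmin.2 (S' \ {x}) hsub
    have huT : u ∈ (S' \ {x})ᶜ := fun h => hu h.1
    have hvT : v ∈ (S' \ {x})ᶜ := fun h => hv h.1
    have hR : (g.induce (S' \ {x})ᶜ).Reachable ⟨u, huT⟩ ⟨v, hvT⟩ := by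
      by_contra hR
      exact hnot ⟨huT, hvT, hR⟩
    obtain ⟨q⟩ := hR
    have key : ∀ (a b : ↑(S' \ {x})ᶜ) (q : (g.induce (S' \ {x})ᶜ).Walk a b),
        a.1 ∈ C → b.1 ∈ C := by
      intro a b q
      induction q with
      | nil => exact fun h => h
      | @cons a a' b hadj q ih =>
        intro haC
        have hgadj : g.Adj a.1 a'.1 := by
          simpa [SimpleGraph.comap_adj] using hadj
        by_cases hax : a'.1 = x
        · exact absurd (hax ▸ hgadj).symm (hno a.1 haC)
        · have ha'S' : a'.1 ∈ S'ᶜ := by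
            intro hmem
            exact a'.2 ⟨hmem, hax⟩
          have ha'C : a'.1 ∈ C := by
            obtain ⟨haS', hr⟩ := haC
            refine ⟨ha'S', hr.trans ?_⟩
            exact SimpleGraph.Adj.reachable (by simpa [SimpleGraph.comap_adj] using hgadj)
          exact ih ha'C
    have hvC : v ∈ C := key _ _ q ⟨hu, SimpleGraph.Reachable.refl _⟩
    obtain ⟨hv', hr⟩ := hvC
    exact hsep hr
  refine ⟨c, ⟨hcsub, hconn_c, hclose⟩, ?_⟩
  intro x hx
  obtain ⟨a, haC, hadj⟩ := hA x hx
  have hac : a ∈ c := hCc haC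
  by_cases hxc : x ∈ c
  · exact Or.inl hxc
  · exact Or.inr ⟨hxc, a, hac, hadj.symm⟩

end AuxLemmas

/-- If `S` is a clique member of a pairwise parallel set `φ` of minimal separators of
a connected graph `g`, then every other member of `φ` is contained in `c ∪ N_g(c)`
for some connected component `c` of `g − S`. -/
theorem parallel_sep_in_some_component {V : Type} [Fintype V]
    (g : SimpleGraph V) (hconn : g.Connected)
    (φ : Set (Set V)) (hφ : PairwiseParallel g φ)
    (S : Set V) (hSφ : S ∈ φ) (hclq : g.IsClique S) :
    ∀ S' ∈ φ, S' ≠ S → ∃ c : Set V, IsCompOf g S c ∧ S' ⊆ c ∪ nbhd g c := by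
  intro S' hS' hne
  obtain ⟨u, v, hmin⟩ := hφ.1 hS'
  obtain ⟨hu, hv, hsep⟩ := hmin.1
  by_cases hcase : ∀ (w : V) (hw : w ∈ S'ᶜ),
      (g.induce S'ᶜ).Reachable ⟨u, hu⟩ ⟨w, hw⟩ → w ∉ S
  · exact core_lemma g hclq hmin hu hv hcase
  · push_neg at hcase
    obtain ⟨a, ha, hra, haS⟩ := hcase
    have hmin' : IsMinSepPair g v u S' :=
      ⟨IsSep_symm hmin.1, fun T hT hTsep => hmin.2 T hT (IsSep_symm hTsep)⟩
    have hcase2 : ∀ (w : V) (hw : w ∈ S'ᶜ),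
        (g.induce S'ᶜ).Reachable ⟨v, hv⟩ ⟨w, hw⟩ → w ∉ S := by
      intro w hw hrw hwS
      by_cases hab : a = w
      · subst hab
        exact hsep (hra.trans hrw.symm)
      · have hadj : (g.induce S'ᶜ).Adj ⟨a, ha⟩ ⟨w, hw⟩ := by
          simpa [SimpleGraph.comap_adj] using hclq haS hwS hab
        exact hsep ((hra.trans hadj.reachable).trans hrw.symm)
    exact core_lemma g hclq hmin' hv hu hcase2
end

section
/- Let g be a connected finite simple graph, let S be a minimal separator of g whose vertices are pairwise adjacent (a clique), and let c1 and c2 be two distinct connected components of g − S. Then no set of vertices is simultaneously a minimal separator of the induced subgraph g[c1 ∪ N_g(c1)] and a minimal separator of the induced subgraph g[c2 ∪ N_g(c2)]; that is, MinSep(g[c1 ∪ N_g(c1)]) ∩ MinSep(g[c2 ∪ N_g(c2)]) = ∅. -/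
open SimpleGraph

lemma walk_mem_comp {V : Type} {g : SimpleGraph V} {S c₁ c₂ : Set V}
    (hc₂ : IsCompOf g S c₂) (hsub : c₁ ⊆ Sᶜ) {a b : ↥c₁}
    (w : (g.induce c₁).Walk a b) (ha : (a : V) ∈ c₂) : (b : V) ∈ c₂ := by
  induction w with
  | nil => exact ha
  | @cons x y z h p ih =>
    exact ih (hc₂.2.2 _ ha _ (hsub y.2) h)

lemma comp_subset {V : Type} {g : SimpleGraph V} {S c₁ c₂ : Set V}
    (hc₁ : IsCompOf g S c₁) (hc₂ : IsCompOf g S c₂) {v : V}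
    (h1 : v ∈ c₁) (h2 : v ∈ c₂) : c₁ ⊆ c₂ := by
  intro w hw
  obtain ⟨p⟩ := hc₁.2.1.preconnected ⟨v, h1⟩ ⟨w, hw⟩
  exact walk_mem_comp hc₂ hc₁.1 p h2

lemma nbhd_subset_sep {V : Type} {g : SimpleGraph V} {S c : Set V}
    (hc : IsCompOf g S c) : nbhd g c ⊆ S := by
  rintro v ⟨hv, u, hu, hadj⟩
  by_contra hvS
  exact hv (hc.2.2 u hu v hvS hadj)

/-- Distinct connected components of `g − S`, for a clique minimal separator `S` of a
connected graph `g`, give induced subgraphs with disjoint sets of minimal separators. -/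
theorem disjoint_minSeps_of_components {V : Type} [Fintype V]
    (g : SimpleGraph V) (hconn : g.Connected)
    (S : Set V) (hS : S ∈ MinSep g) (hclq : g.IsClique S)
    (c₁ c₂ : Set V) (hc₁ : IsCompOf g S c₁) (hc₂ : IsCompOf g S c₂) (hne : c₁ ≠ c₂) :
    ∀ T₁ ∈ MinSep (g.induce (c₁ ∪ nbhd g c₁)), ∀ T₂ ∈ MinSep (g.induce (c₂ ∪ nbhd g c₂)),
      Subtype.val '' T₁ ≠ Subtype.val '' T₂ := by
  intro T₁ hT₁ T₂ hT₂ heq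
  have hdisj12 : ∀ x, x ∈ c₁ → x ∉ c₂ := by
    intro x hx hxc
    exact hne (subset_antisymm (comp_subset hc₁ hc₂ hx hxc) (comp_subset hc₂ hc₁ hxc hx))
  have hTc₁ : ∀ x : V, x ∈ Subtype.val '' T₁ → x ∉ c₁ := by
    intro x hx hxc
    rw [heq] at hx
    obtain ⟨y, hyT, rfl⟩ := hx
    rcases y.2 with h | h
    · exact hdisj12 _ hxc h
    · exact (hc₁.1 hxc) (nbhd_subset_sep hc₂ h)
  obtain ⟨u, v, ⟨hu, hv, hnr⟩, -⟩ := hT₁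
  apply hnr
  let f : g.induce c₁ →g ((g.induce (c₁ ∪ nbhd g c₁)).induce T₁ᶜ) :=
    ⟨fun a => ⟨⟨a.1, Or.inl a.2⟩, fun hmem => hTc₁ a.1 ⟨_, hmem, rfl⟩ a.2⟩,
      fun h => h⟩
  have key : ∀ x : ↥(T₁ᶜ), ∃ (a : V) (ha : a ∈ c₁),
      ((g.induce (c₁ ∪ nbhd g c₁)).induce T₁ᶜ).Reachable x (f ⟨a, ha⟩) := by
    intro x
    rcases x.1.2 with h | h
    · refine ⟨x.1.1, h, ?_⟩
      have : x = f ⟨x.1.1, h⟩ := Subtype.ext (Subtype.ext rfl)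
      rw [← this]
    · obtain ⟨hnot, a, ha, hadj⟩ := h
      refine ⟨a, ha, ?_⟩
      have hadj' : ((g.induce (c₁ ∪ nbhd g c₁)).induce T₁ᶜ).Adj x (f ⟨a, ha⟩) := hadj.symm
      exact hadj'.reachable
  obtain ⟨a, ha, hra⟩ := key ⟨u, hu⟩
  obtain ⟨b, hb, hrb⟩ := key ⟨v, hv⟩
  have hab : (g.induce c₁).Reachable ⟨a, ha⟩ ⟨b, hb⟩ := hc₁.2.1.preconnected _ _
  exact hra.trans ((hab.map f).trans hrb.symm)
end
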